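/- The set S = {(a,b) ∈ F_p^2 : b < a} has exactly 3 special directions, namely the vertical direction, the horizontal direction, and the direction of slope 1. -/
import Mathlib


/-- Number of points of `S` on the line through `x` with direction vector `u`. -/
def lineCount (p : ℕ) [Fact p.Prime] (S : Finset (ZMod p × ZMod p))
    (u x : ZMod p × ZMod p) : ℕ :=
  (S.filter fun w => ∃ t : ZMod p, w = x + t • u).card

/-- Direction vectors of the `p+1` directions: `some m` has slope `m`, `none` is vertical. -/
def dirVec (p : ℕ) : Option (ZMod p) → ZMod p × ZMod p
  | none => (0, 1)
  | some m => (1, m)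

/-- `S` is equidistributed in the direction of the vector `u`. -/
def Equidistributed (p : ℕ) [Fact p.Prime] (S : Finset (ZMod p × ZMod p))
    (u : ZMod p × ZMod p) : Prop :=
  ∀ x y : ZMod p × ZMod p, lineCount p S u x = lineCount p S u y

open Classical in
/-- The set of special (non-equidistributed) directions of `S`. -/
noncomputable def specialDirs (p : ℕ) [Fact p.Prime] (S : Finset (ZMod p × ZMod p)) :
    Finset (Option (ZMod p)) :=
  Finset.univ.filter fun d => ¬ Equidistributed p S (dirVec p d)

/-- The triangle set `{(a,b) : b < a}` with coordinates identified with `{0,…,p-1}`. -/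
def triangle (p : ℕ) [Fact p.Prime] : Finset (ZMod p × ZMod p) :=
  Finset.univ.filter fun w => w.2.val < w.1.val

/-- Number of points of the triangle on the line `y = m x + c`. -/
noncomputable def cnt (p : ℕ) [Fact p.Prime] (m c : ZMod p) : ℕ :=
  (Finset.univ.filter fun s : ZMod p => (m * s + c).val < s.val).card

lemma card_val_lt (p : ℕ) [Fact p.Prime] (k : ℕ) (hk : k ≤ p) :
    (Finset.univ.filter fun b : ZMod p => b.val < k).card = k := by
  have : (Finset.univ.filter fun b : ZMod p => b.val < k) =
      (Finset.range k).image (Nat.cast : ℕ → ZMod p) := by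
    ext b
    simp only [Finset.mem_filter, Finset.mem_univ, true_and, Finset.mem_image, Finset.mem_range]
    constructor
    · intro h
      exact ⟨b.val, h, by simp [ZMod.natCast_val, ZMod.cast_id]⟩
    · rintro ⟨i, hi, rfl⟩
      rwa [ZMod.val_cast_of_lt (lt_of_lt_of_le hi hk)]
  rw [this, Finset.card_image_of_injOn, Finset.card_range]
  intro a ha b hb h
  simp only [Finset.coe_range, Set.mem_Iio] at ha hb
  have := congrArg ZMod.val h
  rwa [ZMod.val_cast_of_lt (lt_of_lt_of_le ha hk), ZMod.val_cast_of_lt (lt_of_lt_of_le hb hk)] at this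

lemma lineCount_slope (p : ℕ) [Fact p.Prime] (m : ZMod p) (x : ZMod p × ZMod p) :
    lineCount p (triangle p) (1, m) x = cnt p m (x.2 - m * x.1) := by
  set c := x.2 - m * x.1 with hc
  have hset : (triangle p).filter (fun w => ∃ t : ZMod p, w = x + t • (1, m)) =
      ((Finset.univ.filter fun s : ZMod p => (m * s + c).val < s.val)).image
        (fun s => (s, m * s + c)) := by
    ext w
    simp only [triangle, Finset.mem_filter, Finset.mem_univ, true_and, Finset.mem_image,
      Prod.smul_mk, smul_eq_mul, mul_one, Prod.ext_iff, Prod.mk_add_mk,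
      Prod.fst_add, Prod.snd_add]
    constructor
    · rintro ⟨hlt, t, h1, h2⟩
      have h2' : w.2 = m * w.1 + c := by rw [hc, h1, h2]; ring
      exact ⟨w.1, by rw [← h2']; exact hlt, rfl, h2'.symm⟩
    · rintro ⟨s, hs, rfl, h2⟩
      refine ⟨by rw [← h2]; exact hs, w.1 - x.1, by ring, by rw [← h2, hc]; ring⟩
  rw [lineCount, hset, Finset.card_image_of_injective]
  · rfl
  · intro a b h
    exact (Prod.ext_iff.mp h).1

lemma lineCount_vert (p : ℕ) [Fact p.Prime] (x : ZMod p × ZMod p) :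
    lineCount p (triangle p) (0, 1) x = x.1.val := by
  have hset : (triangle p).filter (fun w => ∃ t : ZMod p, w = x + t • (0, 1)) =
      ((Finset.univ.filter fun b : ZMod p => b.val < x.1.val)).image (fun b => (x.1, b)) := by
    ext w
    simp only [triangle, Finset.mem_filter, Finset.mem_univ, true_and, Finset.mem_image,
      Prod.smul_mk, smul_eq_mul, mul_one, Prod.ext_iff, Prod.fst_add, Prod.snd_add,
      smul_zero]
    constructor
    · rintro ⟨hlt, t, h1, h2⟩
      have h1' : w.1 = x.1 := by rw [h1]; ring
      exact ⟨w.2, by rw [← h1']; exact hlt, h1'.symm, rfl⟩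
    · rintro ⟨b, hb, h1, rfl⟩
      exact ⟨by rw [h1] at hb; exact hb, w.2 - x.2, by rw [← h1]; ring, by ring⟩
  rw [lineCount, hset, Finset.card_image_of_injective, card_val_lt p _ (le_of_lt (ZMod.val_lt _))]
  intro a b h
  exact (Prod.ext_iff.mp h).2

lemma cnt_key (p : ℕ) [Fact p.Prime] (m c : ZMod p) (hm0 : m ≠ 0) (hm1 : m ≠ 1) :
    2 * cnt p m c = p - 1 := by
  haveI : NeZero p := ⟨(Fact.out : p.Prime).ne_zero⟩
  have hp : 0 < p := (Fact.out : p.Prime).pos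
  set f : ZMod p → ZMod p := fun s => m * s + c with hf
  set g : ZMod p → ZMod p := fun s => (1 - m) * s - c with hg
  have hfg : ∀ s, f s + g s = s := fun s => by simp only [hf, hg]; ring
  -- pointwise identity
  have key : ∀ s : ZMod p, (f s).val + (g s).val
      = s.val + (if s.val < (f s).val then p else 0) := by
    intro s
    have hmod : s.val = ((f s).val + (g s).val) % p := by
      conv_lhs => rw [← hfg s]
      rw [ZMod.val_add]
    have hA := ZMod.val_lt (f s)
    have hB := ZMod.val_lt (g s)
    by_cases h : (f s).val + (g s).val < p
    · rw [Nat.mod_eq_of_lt h] at hmod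
      have : ¬ s.val < (f s).val := by omega
      simp [this]; omega
    · push_neg at h
      rw [Nat.mod_eq_sub_mod h, Nat.mod_eq_of_lt (by omega)] at hmod
      have : s.val < (f s).val := by omega
      simp [this]; omega
  -- sums over bijections
  have sum_f : ∑ s : ZMod p, (f s).val = ∑ s : ZMod p, s.val := by
    have := Equiv.sum_comp ((Equiv.mulLeft₀ m hm0).trans (Equiv.addRight c))
      (ZMod.val : ZMod p → ℕ)
    simpa [Equiv.trans_apply, hf] using this
  have sum_g : ∑ s : ZMod p, (g s).val = ∑ s : ZMod p, s.val := by
    have h1m : (1 - m) ≠ 0 := sub_ne_zero.mpr (Ne.symm hm1)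
    have := Equiv.sum_comp ((Equiv.mulLeft₀ (1-m) h1m).trans (Equiv.addRight (-c)))
      (ZMod.val : ZMod p → ℕ)
    simpa [Equiv.trans_apply, hg, sub_eq_add_neg] using this
  -- Gauss sum
  have sum_val : (∑ s : ZMod p, s.val) * 2 = p * (p - 1) := by
    have himg : (Finset.univ : Finset (ZMod p)) = (Finset.range p).image Nat.cast := by
      ext b
      simp only [Finset.mem_univ, true_iff, Finset.mem_image, Finset.mem_range]
      exact ⟨b.val, ZMod.val_lt b, by simp [ZMod.natCast_val, ZMod.cast_id]⟩
    have hinj : Set.InjOn (Nat.cast : ℕ → ZMod p) (Finset.range p) := by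
      intro a ha b hb h
      simp only [Finset.coe_range, Set.mem_Iio] at ha hb
      have := congrArg ZMod.val h
      rwa [ZMod.val_cast_of_lt ha, ZMod.val_cast_of_lt hb] at this
    rw [himg, Finset.sum_image hinj]
    rw [show ∑ i ∈ Finset.range p, ((i : ZMod p)).val = ∑ i ∈ Finset.range p, i from
      Finset.sum_congr rfl fun i hi => ZMod.val_cast_of_lt (Finset.mem_range.mp hi)]
    exact Finset.sum_range_id_mul_two p
  -- sum the pointwise identity
  set B := (Finset.univ.filter fun s : ZMod p => s.val < (f s).val).card with hBdef
  have total : ∑ s : ZMod p, s.val = B * p := by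
    have h0 := Finset.sum_congr rfl (fun s (_ : s ∈ (Finset.univ : Finset (ZMod p))) => key s)
    have hR : ∑ s : ZMod p, (s.val + if s.val < (f s).val then p else 0)
        = (∑ s : ZMod p, s.val) + B * p := by
      rw [Finset.sum_add_distrib]
      congr 1
      rw [Finset.sum_ite, Finset.sum_const, Finset.sum_const_zero, add_zero, smul_eq_mul]
    rw [Finset.sum_add_distrib, sum_f, sum_g, hR] at h0
    omega
  have hB : 2 * B = p - 1 := by
    rw [total] at sum_val
    have : p * (2 * B) = p * (p - 1) := by ring_nf; ring_nf at sum_val; linarith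
    exact Nat.eq_of_mul_eq_mul_left hp this
  -- the fixed point
  have hEset : (Finset.univ.filter fun s : ZMod p => (f s).val = s.val) = {(1 - m)⁻¹ * c} := by
    have h1m : (1 - m) ≠ 0 := sub_ne_zero.mpr (Ne.symm hm1)
    ext s
    simp only [Finset.mem_filter, Finset.mem_univ, true_and, Finset.mem_singleton]
    constructor
    · intro h
      have hfs : f s = s := ZMod.val_injective p h
      have h4 : (1 - m) * s = c := by rw [hf] at hfs; linear_combination -hfs
      rw [← h4, inv_mul_cancel_left₀ h1m]
    · rintro rfl
      congr 1
      have h5 : (1 - m) * ((1 - m)⁻¹ * c) = c := mul_inv_cancel_left₀ h1m c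
      show m * ((1 - m)⁻¹ * c) + c = (1 - m)⁻¹ * c
      linear_combination -h5
  have hE : (Finset.univ.filter fun s : ZMod p => (f s).val = s.val).card = 1 := by
    rw [hEset]; simp
  -- trichotomy
  have hsplit : cnt p m c +
      ((Finset.univ.filter fun s : ZMod p => (f s).val = s.val).card + B) = p := by
    rw [cnt]
    have h1 := Finset.card_filter_add_card_filter_not
      (s := (Finset.univ : Finset (ZMod p))) (p := fun s => (f s).val < s.val)
    have h2 : (Finset.univ.filter fun s : ZMod p => ¬ (f s).val < s.val) =
        (Finset.univ.filter fun s : ZMod p => (f s).val = s.val) ∪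
        (Finset.univ.filter fun s : ZMod p => s.val < (f s).val) := by
      ext s
      simp only [Finset.mem_filter, Finset.mem_univ, true_and, Finset.mem_union]
      omega
    have h3 : Disjoint (Finset.univ.filter fun s : ZMod p => (f s).val = s.val)
        (Finset.univ.filter fun s : ZMod p => s.val < (f s).val) := by
      rw [Finset.disjoint_left]
      intro s hs1 hs2
      simp only [Finset.mem_filter, Finset.mem_univ, true_and] at hs1 hs2
      omega
    rw [h2, Finset.card_union_of_disjoint h3] at h1
    simpa using h1
  omega

lemma negone_cast (p : ℕ) [Fact p.Prime] (hp1 : 1 ≤ p) : ((p - 1 : ℕ) : ZMod p) = -1 := by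
  rw [Nat.cast_sub hp1, Nat.cast_one, CharP.cast_eq_zero, zero_sub]

lemma val_negone (p : ℕ) [Fact p.Prime] (hp1 : 1 ≤ p) : (-1 : ZMod p).val = p - 1 := by
  haveI : NeZero p := ⟨by omega⟩
  rw [← negone_cast p hp1, ZMod.val_cast_of_lt (by omega)]

lemma cnt_zero_zero (p : ℕ) [Fact p.Prime] (hp3 : 3 ≤ p) : cnt p 0 0 = p - 1 := by
  haveI : NeZero p := ⟨(Fact.out : p.Prime).ne_zero⟩
  rw [cnt]
  have h : (Finset.univ.filter fun s : ZMod p => ((0:ZMod p) * s + 0).val < s.val)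
      = Finset.univ.erase 0 := by
    ext s
    simp only [Finset.mem_filter, Finset.mem_univ, true_and, Finset.mem_erase, and_true,
      zero_mul, zero_add, ZMod.val_zero]
    constructor
    · intro hlt h0
      rw [h0, ZMod.val_zero] at hlt
      omega
    · intro hne
      have : s.val ≠ 0 := fun h0 => hne ((ZMod.val_eq_zero s).mp h0)
      omega
  rw [h, Finset.card_erase_of_mem (Finset.mem_univ _), Finset.card_univ, ZMod.card]

lemma cnt_zero_negone (p : ℕ) [Fact p.Prime] : cnt p 0 (-1) = 0 := by
  haveI : NeZero p := ⟨(Fact.out : p.Prime).ne_zero⟩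
  have hp1 : 1 ≤ p := (Fact.out : p.Prime).pos
  rw [cnt, Finset.card_eq_zero]
  rw [Finset.filter_eq_empty_iff]
  intro s _
  simp only [zero_mul, zero_add, val_negone p hp1]
  have := ZMod.val_lt s
  omega

lemma cnt_one_zero (p : ℕ) [Fact p.Prime] : cnt p 1 0 = 0 := by
  rw [cnt, Finset.card_eq_zero, Finset.filter_eq_empty_iff]
  intro s _
  simp

lemma cnt_one_one (p : ℕ) [Fact p.Prime] (hp3 : 3 ≤ p) : cnt p 1 1 = 1 := by
  haveI : NeZero p := ⟨(Fact.out : p.Prime).ne_zero⟩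
  rw [cnt]
  have h : (Finset.univ.filter fun s : ZMod p => ((1:ZMod p) * s + 1).val < s.val)
      = {(-1 : ZMod p)} := by
    ext s
    simp only [Finset.mem_filter, Finset.mem_univ, true_and, Finset.mem_singleton, one_mul]
    constructor
    · intro hlt
      by_contra hne
      have hv : s.val ≠ p - 1 := fun h0 => hne (by
        have : s = ((p - 1 : ℕ) : ZMod p) := by
          rw [← h0, ZMod.natCast_val, ZMod.cast_id]
        rw [this, negone_cast p (by omega)])
      have hsp := ZMod.val_lt s
      have hadd : (s + 1).val = s.val + 1 := by
        rw [ZMod.val_add_of_lt]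
        · rw [ZMod.val_one]
        · rw [ZMod.val_one]; omega
      omega
    · rintro rfl
      rw [neg_add_cancel, ZMod.val_zero, val_negone p (by omega)]
      omega
  rw [h, Finset.card_singleton]

theorem stmt_6 (p : ℕ) [Fact p.Prime] (hodd : Odd p) (hp3 : 3 ≤ p) :
    specialDirs p (triangle p) = {none, some 0, some 1} := by
  haveI : NeZero p := ⟨(Fact.out : p.Prime).ne_zero⟩
  ext d
  simp only [specialDirs, Finset.mem_filter, Finset.mem_univ, true_and,
    Finset.mem_insert, Finset.mem_singleton]
  match d with
  | none =>
    simp only [true_or, iff_true]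
    intro h
    have := h ((0 : ZMod p), 0) ((1 : ZMod p), 0)
    rw [show dirVec p none = ((0 : ZMod p), 1) from rfl] at this
    rw [lineCount_vert, lineCount_vert] at this
    simp only [ZMod.val_zero, ZMod.val_one] at this
    omega
  | some m =>
    rw [show dirVec p (some m) = ((1 : ZMod p), m) from rfl]
    constructor
    · intro h
      by_contra hc
      push_neg at hc
      obtain ⟨-, h0, h1⟩ := hc
      have hm0 : m ≠ 0 := fun hm => h0 (by rw [hm])
      have hm1 : m ≠ 1 := fun hm => h1 (by rw [hm])
      apply h
      intro x y
      rw [lineCount_slope, lineCount_slope]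
      have k1 := cnt_key p m (x.2 - m * x.1) hm0 hm1
      have k2 := cnt_key p m (y.2 - m * y.1) hm0 hm1
      omega
    · rintro (h | h | h)
      · exact absurd h (by simp)
      · obtain rfl : m = 0 := Option.some_injective _ h
        intro hEq
        have := hEq ((0 : ZMod p), 0) ((0 : ZMod p), -1)
        rw [lineCount_slope, lineCount_slope] at this
        simp only [mul_zero, sub_zero, zero_mul] at this
        rw [cnt_zero_zero p hp3, cnt_zero_negone p] at this
        omega
      · obtain rfl : m = 1 := Option.some_injective _ h
        intro hEq
        have := hEq ((0 : ZMod p), 0) ((0 : ZMod p), 1)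
        rw [lineCount_slope, lineCount_slope] at this
        simp only [mul_zero, sub_zero] at this
        rw [cnt_one_zero p, cnt_one_one p hp3] at this
        omega
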